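/- Let k ≥ 1, n = 2k, and 1 ≤ r ≤ 4k². Let N be the number of equivalence classes (orbits) of the set of all boards with r blockers on the n×n grid under the action of D4. Then 8·N = C(4k², r) + 2·(if 4 ∣ r then C(k², r/4) else 0) + 3·(if 2 ∣ r then C(2k², r/2) else 0) + 2·Σ_{t=0}^{r} (if 2 ∣ (r−t) then C(2k, t)·C(k(2k−1), (r−t)/2) else 0). -/

import Mathlib

/-- The dihedral group `D4` acting on an `n × n` grid, as the eight permutations
`R0, R90, R180, R270, H, V, D, D′` of `Fin n × Fin n` (`Fin.rev i = n-1-i`). -/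
def D4 (n : ℕ) : Set ((Fin n × Fin n) → (Fin n × Fin n)) :=
  { fun p => p,                       -- R0
    fun p => (p.2.rev, p.1),          -- R90
    fun p => (p.1.rev, p.2.rev),      -- R180
    fun p => (p.2, p.1.rev),          -- R270
    fun p => (p.1.rev, p.2),          -- H
    fun p => (p.1, p.2.rev),          -- V
    fun p => (p.2, p.1),              -- D
    fun p => (p.2.rev, p.1.rev) }     -- D′

/-- The orbit of a board `B` under a set of symmetries `Gs`. -/
def orbitOf {α : Type*} [DecidableEq α] (Gs : Set (α → α)) (B : Finset α) :
    Set (Finset α) :=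
  {B' | ∃ g ∈ Gs, B.image g = B'}

open Finset

set_option linter.unusedSectionVars false
set_option linter.unusedVariables false

section MasterCount

variable {X : Type*} [Fintype X] [DecidableEq X]

theorem master_count (f : X → X) (hf : Function.Injective f) (d : ℕ) (hd : 0 < d)
    (Δ F : Finset X)
    (hΔ : ∀ x ∈ Δ, f x = x)
    (hF : ∀ x ∈ F, f^[d] x = x)
    (hcov : ∀ y : X, y ∈ Δ ∨ ∃ x ∈ F, ∃ i < d, f^[i] x = y)
    (hdis : ∀ x ∈ F, ∀ i < d, f^[i] x ∉ Δ)
    (huniq : ∀ x ∈ F, ∀ x' ∈ F, ∀ i < d, ∀ i' < d, f^[i] x = f^[i'] x' → x = x' ∧ i = i')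
    (r : ℕ) :
    (univ.filter fun B : Finset X => B.card = r ∧ B.image f = B).card =
      ∑ t ∈ range (r + 1),
        (if d ∣ (r - t) then Δ.card.choose t * F.card.choose ((r - t) / d) else 0) := by
  classical
  set build : Finset X × Finset X → Finset X :=
    fun TS => TS.1 ∪ (range d).biUnion (fun i => TS.2.image f^[i]) with hbuild
  -- membership in build
  have hmem_build : ∀ (TS : Finset X × Finset X) (y : X),
      y ∈ build TS ↔ y ∈ TS.1 ∨ ∃ i < d, ∃ s ∈ TS.2, f^[i] s = y := by
    intro TS y
    simp only [hbuild, mem_union, mem_biUnion, mem_range, mem_image]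
  -- cardinality of build
  have hcard_build : ∀ T ⊆ Δ, ∀ S ⊆ F, (build (T, S)).card = T.card + d * S.card := by
    intro T hT S hS
    have hdisj : Disjoint T ((range d).biUnion (fun i => S.image f^[i])) := by
      rw [Finset.disjoint_left]
      intro x hx hx2
      simp only [mem_biUnion, mem_range, mem_image] at hx2
      obtain ⟨i, hi, s, hs, hsx⟩ := hx2
      exact hdis s (hS hs) i hi (hsx ▸ hT hx)
    rw [hbuild]
    rw [Finset.card_union_of_disjoint hdisj, Finset.card_biUnion]
    · congr 1
      rw [Finset.sum_congr rfl (fun i _ => Finset.card_image_of_injective S (hf.iterate i))]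
      simp [mul_comm]
    · intro i hi j hj hij
      rw [Function.onFun, Finset.disjoint_left]
      intro x hx hx2
      simp only [mem_image] at hx hx2
      obtain ⟨s, hs, rfl⟩ := hx
      obtain ⟨s', hs', he⟩ := hx2
      exact hij ((huniq s' (hS hs') s (hS hs) j (mem_range.mp hj) i (mem_range.mp hi) he).2).symm
  -- invariant sets are closed under f-iterates
  have hiter_mem : ∀ (B : Finset X), B.image f = B → ∀ i, ∀ x ∈ B, f^[i] x ∈ B := by
    intro B hB i
    induction i with
    | zero => simp
    | succ n ih =>
      intro x hx
      rw [Function.iterate_succ_apply']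
      exact hB ▸ Finset.mem_image_of_mem f (ih x hx)
  -- decomposition of an invariant set
  have hdecomp : ∀ (B : Finset X), B.image f = B → build (B ∩ Δ, B ∩ F) = B := by
    intro B hB
    apply Finset.Subset.antisymm
    · intro y hy
      rw [hmem_build] at hy
      rcases hy with hy | ⟨i, _, s, hs, rfl⟩
      · exact (Finset.mem_inter.mp hy).1
      · exact hiter_mem B hB i s (Finset.mem_inter.mp hs).1
    · intro y hy
      rw [hmem_build]
      rcases hcov y with h | ⟨x, hx, i, hi, rfl⟩
      · exact Or.inl (Finset.mem_inter.mpr ⟨hy, h⟩)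
      · refine Or.inr ⟨i, hi, x, Finset.mem_inter.mpr ⟨?_, hx⟩, rfl⟩
        have : f^[d - i] (f^[i] x) = x := by
          rw [← Function.iterate_add_apply, Nat.sub_add_cancel (le_of_lt hi)]
          exact hF x hx
        exact this ▸ hiter_mem B hB (d - i) _ hy
  -- build is invariant
  have hinv_build : ∀ T ⊆ Δ, ∀ S ⊆ F, (build (T, S)).image f = build (T, S) := by
    intro T hT S hS
    apply Finset.eq_of_subset_of_card_le
    · intro y hy
      simp only [Finset.mem_image] at hy
      obtain ⟨x, hx, rfl⟩ := hy
      rw [hmem_build] at hx ⊢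
      rcases hx with hx | ⟨i, hi, s, hs, rfl⟩
      · exact Or.inl (by rw [hΔ x (hT hx)]; exact hx)
      · rcases Nat.lt_or_ge (i + 1) d with h | h
        · exact Or.inr ⟨i + 1, h, s, hs, Function.iterate_succ_apply' f i s⟩
        · have : i + 1 = d := by omega
          refine Or.inr ⟨0, hd, s, hs, ?_⟩
          have h2' : f^[i + 1] s = f (f^[i] s) := Function.iterate_succ_apply' f i s
          rw [Function.iterate_zero_apply, ← h2', this]
          exact (hF s (hS hs)).symm
    · exact le_of_eq (Finset.card_image_of_injective _ hf).symm
  -- the pair set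
  set P : Finset (Finset X × Finset X) :=
    (Δ.powerset ×ˢ F.powerset).filter (fun TS => TS.1.card + d * TS.2.card = r) with hP
  have hcardP : (univ.filter fun B : Finset X => B.card = r ∧ B.image f = B).card = P.card := by
    apply Finset.card_bij' (i := fun B _ => (B ∩ Δ, B ∩ F)) (j := fun TS _ => build TS)
    · intro B hB
      simp only [mem_filter, mem_univ, true_and] at hB
      rw [hP, mem_filter, mem_product, mem_powerset, mem_powerset]
      refine ⟨⟨Finset.inter_subset_right, Finset.inter_subset_right⟩, ?_⟩
      rw [← hcard_build (B ∩ Δ) Finset.inter_subset_right (B ∩ F) Finset.inter_subset_right,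
        hdecomp B hB.2, hB.1]
    · intro TS hTS
      rw [hP, mem_filter, mem_product, mem_powerset, mem_powerset] at hTS
      obtain ⟨⟨h1, h2⟩, h3⟩ := hTS
      simp only [mem_filter, mem_univ, true_and]
      exact ⟨(hcard_build TS.1 h1 TS.2 h2).trans h3, hinv_build TS.1 h1 TS.2 h2⟩
    · intro B hB
      simp only [mem_filter, mem_univ, true_and] at hB
      exact hdecomp B hB.2
    · intro TS hTS
      rw [hP, mem_filter, mem_product, mem_powerset, mem_powerset] at hTS
      obtain ⟨⟨h1, h2⟩, _⟩ := hTS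
      have hTΔ : build TS ∩ Δ = TS.1 := by
        apply Finset.Subset.antisymm
        · intro x hx
          obtain ⟨hx1, hx2⟩ := Finset.mem_inter.mp hx
          rw [hmem_build] at hx1
          rcases hx1 with h | ⟨i, hi, s, hs, rfl⟩
          · exact h
          · exact absurd hx2 (hdis s (h2 hs) i hi)
        · intro x hx
          refine Finset.mem_inter.mpr ⟨?_, h1 hx⟩
          rw [hmem_build]
          exact Or.inl hx
      have hSF : build TS ∩ F = TS.2 := by
        apply Finset.Subset.antisymm
        · intro x hx
          obtain ⟨hx1, hx2⟩ := Finset.mem_inter.mp hx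
          rw [hmem_build] at hx1
          rcases hx1 with h | ⟨i, hi, s, hs, rfl⟩
          · exact absurd (h1 h) (by simpa using hdis x hx2 0 hd)
          · have := huniq (f^[i] s) hx2 s (h2 hs) 0 hd i hi (by simp)
            rw [← this.1] at hs
            exact hs
        · intro x hx
          refine Finset.mem_inter.mpr ⟨?_, h2 hx⟩
          rw [hmem_build]
          exact Or.inr ⟨0, hd, x, hx, by simp⟩
      calc (build TS ∩ Δ, build TS ∩ F) = (TS.1, TS.2) := by rw [hTΔ, hSF]
        _ = TS := rfl
  rw [hcardP]
  -- count P fiberwise over T.card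
  rw [Finset.card_eq_sum_card_fiberwise (f := fun TS => TS.1.card) (t := range (r + 1))
    (fun TS hTS => by
      simp only [Finset.mem_coe, hP, mem_filter] at hTS
      obtain ⟨-, h⟩ := hTS
      simp only [Finset.mem_coe, mem_range]
      omega)]
  apply Finset.sum_congr rfl
  intro t ht
  rw [mem_range] at ht
  have htr : t ≤ r := by omega
  have hPP : P.filter (fun TS => TS.1.card = t) =
      (Δ.powerset.filter (fun T => T.card = t)) ×ˢ
        (F.powerset.filter (fun S => d * S.card = r - t)) := by
    rw [hP, Finset.filter_filter, ← Finset.filter_product]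
    apply Finset.filter_congr
    intro TS _
    constructor
    · rintro ⟨h1, h2⟩; exact ⟨h2, by omega⟩
    · rintro ⟨h1, h2⟩; exact ⟨by omega, h1⟩
  rw [hPP, Finset.card_product, ← Finset.powersetCard_eq_filter, Finset.card_powersetCard]
  by_cases hdvd : d ∣ r - t
  · obtain ⟨m, hm⟩ := hdvd
    have : F.powerset.filter (fun S => d * S.card = r - t) = Finset.powersetCard m F := by
      rw [Finset.powersetCard_eq_filter]
      apply Finset.filter_congr
      intro S _
      constructor
      · intro h; exact Nat.eq_of_mul_eq_mul_left hd (h.trans hm)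
      · intro h; rw [h, ← hm]
    rw [this, Finset.card_powersetCard, if_pos ⟨m, hm⟩, hm, Nat.mul_div_cancel_left m hd]
  · rw [if_neg hdvd]
    have : F.powerset.filter (fun S => d * S.card = r - t) = ∅ := by
      apply Finset.filter_false_of_mem
      intro S _
      intro h
      exact hdvd ⟨S.card, h.symm⟩
    rw [this]
    simp

theorem free_count (f : X → X) (hf : Function.Injective f) (d : ℕ) (hd : 0 < d)
    (F : Finset X)
    (hF : ∀ x ∈ F, f^[d] x = x)
    (hcov : ∀ y : X, ∃ x ∈ F, ∃ i < d, f^[i] x = y)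
    (huniq : ∀ x ∈ F, ∀ x' ∈ F, ∀ i < d, ∀ i' < d, f^[i] x = f^[i'] x' → x = x' ∧ i = i')
    (r : ℕ) :
    (univ.filter fun B : Finset X => B.card = r ∧ B.image f = B).card =
      if d ∣ r then F.card.choose (r / d) else 0 := by
  rw [master_count f hf d hd ∅ F (by simp) hF (fun y => Or.inr (hcov y)) (by simp) huniq r]
  rw [Finset.sum_eq_single_of_mem 0 (mem_range.mpr (Nat.succ_pos r))]
  · simp
  · intro t _ ht
    obtain ⟨u, rfl⟩ := Nat.exists_eq_succ_of_ne_zero ht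
    simp [Nat.choose_zero_succ]

section invol
variable (f : X → X) (hinv : ∀ x, f (f x) = x)

theorem it2 (x : X) : f^[2] x = f (f x) := by
  rw [show (2 : ℕ) = 1 + 1 from rfl, Function.iterate_add_apply, Function.iterate_one]

include hinv in
theorem huniq_invol (F : Finset X) (hne : ∀ x ∈ F, f x ∉ F) :
    ∀ x ∈ F, ∀ x' ∈ F, ∀ i < 2, ∀ i' < 2, f^[i] x = f^[i'] x' → x = x' ∧ i = i' := by
  have hf : Function.Injective f := Function.LeftInverse.injective hinv
  intro x hx x' hx' i hi i' hi' h
  interval_cases i <;> interval_cases i' <;>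
    simp only [Function.iterate_zero_apply, Function.iterate_one] at h
  · exact ⟨h, rfl⟩
  · exact absurd (h ▸ hx) (hne x' hx')
  · exact absurd (h ▸ hx') (hne x hx)
  · exact ⟨hf h, rfl⟩

include hinv in
theorem invol_count (Δ F : Finset X)
    (hΔ : ∀ x ∈ Δ, f x = x)
    (hcov : ∀ y : X, y ∈ Δ ∨ y ∈ F ∨ f y ∈ F)
    (hFΔ : ∀ x ∈ F, x ∉ Δ ∧ f x ∉ Δ)
    (hne : ∀ x ∈ F, f x ∉ F) (r : ℕ) :
    (univ.filter fun B : Finset X => B.card = r ∧ B.image f = B).card =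
      ∑ t ∈ range (r + 1),
        (if 2 ∣ (r - t) then Δ.card.choose t * F.card.choose ((r - t) / 2) else 0) := by
  have hf : Function.Injective f := Function.LeftInverse.injective hinv
  refine master_count f hf 2 two_pos Δ F hΔ (fun x hx => by rw [it2]; exact hinv x) ?_ ?_
    (huniq_invol f hinv F hne) r
  · intro y
    rcases hcov y with h | h | h
    · exact Or.inl h
    · exact Or.inr ⟨y, h, 0, two_pos, rfl⟩
    · exact Or.inr ⟨f y, h, 1, one_lt_two, by rw [Function.iterate_one]; exact hinv y⟩
  · intro x hx i hi
    interval_cases i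
    · simpa using (hFΔ x hx).1
    · simpa using (hFΔ x hx).2

include hinv in
theorem invol_free (F : Finset X)
    (hcov : ∀ y : X, y ∈ F ∨ f y ∈ F)
    (hne : ∀ x ∈ F, f x ∉ F) (r : ℕ) :
    (univ.filter fun B : Finset X => B.card = r ∧ B.image f = B).card =
      if 2 ∣ r then F.card.choose (r / 2) else 0 := by
  have hf : Function.Injective f := Function.LeftInverse.injective hinv
  refine free_count f hf 2 two_pos F (fun x hx => by rw [it2]; exact hinv x) ?_
    (huniq_invol f hinv F hne) r
  intro y
  rcases hcov y with h | h
  · exact ⟨y, h, 0, two_pos, rfl⟩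
  · exact ⟨f y, h, 1, one_lt_two, by rw [Function.iterate_one]; exact hinv y⟩

end invol

section rot4
variable (f : X → X) (h4 : ∀ x, f (f (f (f x))) = x)

theorem it3 (x : X) : f^[3] x = f (f (f x)) := by
  rw [show (3 : ℕ) = 1 + 1 + 1 from rfl, Function.iterate_add_apply, Function.iterate_add_apply,
    Function.iterate_one]

theorem it4 (x : X) : f^[4] x = f (f (f (f x))) := by
  rw [show (4 : ℕ) = 1 + 1 + 1 + 1 from rfl, Function.iterate_add_apply,
    Function.iterate_add_apply, Function.iterate_add_apply, Function.iterate_one]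

include h4 in
theorem rot4_free (F : Finset X)
    (hcov : ∀ y : X, y ∈ F ∨ f y ∈ F ∨ f (f y) ∈ F ∨ f (f (f y)) ∈ F)
    (hne : ∀ x ∈ F, f x ∉ F ∧ f (f x) ∉ F ∧ f (f (f x)) ∉ F) (r : ℕ) :
    (univ.filter fun B : Finset X => B.card = r ∧ B.image f = B).card =
      if 4 ∣ r then F.card.choose (r / 4) else 0 := by
  have hf : Function.Injective f :=
    Function.LeftInverse.injective (g := f ∘ f ∘ f) (fun x => h4 x)
  have h5 : ∀ x, f (f (f (f (f x)))) = f x := fun x => congrArg f (h4 x)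
  refine free_count f hf 4 four_pos F (fun x _ => by rw [it4]; exact h4 x) ?_ ?_ r
  · intro y
    rcases hcov y with h | h | h | h
    · exact ⟨y, h, 0, four_pos, rfl⟩
    · exact ⟨f y, h, 3, by norm_num, by rw [it3]; exact h4 y⟩
    · exact ⟨f (f y), h, 2, by norm_num, by rw [it2]; exact h4 y⟩
    · exact ⟨f (f (f y)), h, 1, by norm_num, by rw [Function.iterate_one]; exact h4 y⟩
  · intro x hx x' hx' i hi i' hi' h
    interval_cases i <;> interval_cases i' <;>
      simp only [Function.iterate_zero_apply, Function.iterate_one, it2, it3] at h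
    · exact ⟨h, rfl⟩
    · exact absurd (h ▸ hx) (hne x' hx').1
    · exact absurd (h ▸ hx) (hne x' hx').2.1
    · exact absurd (h ▸ hx) (hne x' hx').2.2
    · exact absurd (h ▸ hx') (hne x hx).1
    · exact ⟨hf h, rfl⟩
    · -- f x = f (f x') : x = f x'
      exact absurd ((hf h) ▸ hx) (hne x' hx').1
    · -- f x = f (f (f x')) : x = f (f x')
      exact absurd ((hf h) ▸ hx) (hne x' hx').2.1
    · exact absurd (h ▸ hx') (hne x hx).2.1
    · exact absurd ((hf h) ▸ hx') (hne x hx).1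
    · exact ⟨hf (hf h), rfl⟩
    · -- f (f x) = f (f (f x')) : x = f x'
      exact absurd ((hf (hf h)) ▸ hx) (hne x' hx').1
    · exact absurd (h ▸ hx') (hne x hx).2.2
    · exact absurd ((hf h) ▸ hx') (hne x hx).2.1
    · exact absurd ((hf (hf h)) ▸ hx') (hne x hx).1
    · exact ⟨hf (hf (hf h)), rfl⟩

end rot4

end MasterCount

/-- rotation by 90 degrees -/
def rotP (n : ℕ) : Equiv.Perm (Fin n × Fin n) where
  toFun p := (p.2.rev, p.1)
  invFun p := (p.2, p.1.rev)
  left_inv p := by simp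
  right_inv p := by simp

/-- diagonal reflection -/
def diagP (n : ℕ) : Equiv.Perm (Fin n × Fin n) where
  toFun p := (p.2, p.1)
  invFun p := (p.2, p.1)
  left_inv p := by simp
  right_inv p := by simp

theorem rotP_pow4 (n : ℕ) : (rotP n) ^ 4 = 1 := by
  ext p <;> simp [rotP, pow_succ, Equiv.Perm.mul_apply]

theorem diagP_sq (n : ℕ) : (diagP n) * (diagP n) = 1 := by
  ext p <;> simp [diagP, Equiv.Perm.mul_apply]

theorem rotP_inv_apply (n : ℕ) (p : Fin n × Fin n) : (rotP n)⁻¹ p = (p.2, p.1.rev) := rfl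

theorem rotP_apply (n : ℕ) (p : Fin n × Fin n) : rotP n p = (p.2.rev, p.1) := rfl

theorem diagP_apply (n : ℕ) (p : Fin n × Fin n) : diagP n p = (p.2, p.1) := rfl

theorem rot_diag (n : ℕ) : (rotP n) * (diagP n) = (diagP n) * (rotP n)⁻¹ := by
  ext p <;> simp [rotP_apply, diagP_apply, rotP_inv_apply, Equiv.Perm.mul_apply]

theorem rotpow_diag (n : ℕ) (a : ℕ) :
    (rotP n) ^ a * (diagP n) = (diagP n) * ((rotP n) ^ a)⁻¹ := by
  induction a with
  | zero => simp
  | succ m ih =>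
    rw [pow_succ', mul_assoc, ih, ← mul_assoc, rot_diag, mul_assoc, ← mul_inv_rev, ← pow_succ, pow_succ']

/-- the key ψ map -/
def psi (n : ℕ) (i : ZMod 4) : Equiv.Perm (Fin n × Fin n) := (rotP n) ^ i.val

theorem psi_add (n : ℕ) (i j : ZMod 4) : psi n (i + j) = psi n i * psi n j := by
  rw [psi, psi, psi, ← pow_add, ZMod.val_add, ← pow_eq_pow_mod _ (rotP_pow4 n)]

theorem psi_sub (n : ℕ) (i j : ZMod 4) : psi n (j - i) = (psi n i)⁻¹ * psi n j := by
  have : psi n i * psi n (j - i) = psi n j := by rw [← psi_add]; ring_nf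
  rw [← this]; group

/-- the homomorphism from DihedralGroup 4 -/
def phi (n : ℕ) : DihedralGroup 4 →* Equiv.Perm (Fin n × Fin n) :=
  MonoidHom.mk' (fun g => match g with
    | DihedralGroup.r i => psi n i
    | DihedralGroup.sr i => diagP n * psi n i) (by
    rintro (i | i) (j | j) <;>
      simp only [DihedralGroup.r_mul_r, DihedralGroup.r_mul_sr, DihedralGroup.sr_mul_r,
        DihedralGroup.sr_mul_sr]
    · exact psi_add n i j
    · rw [psi_sub, ← mul_assoc, ← mul_assoc, psi, rotpow_diag, psi]
    · rw [psi_add, mul_assoc]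
    · rw [psi_sub, ← mul_assoc, mul_assoc (diagP n) (psi n i) (diagP n)]
      rw [show psi n i * diagP n = diagP n * (psi n i)⁻¹ from rotpow_diag n i.val]
      rw [← mul_assoc (diagP n) (diagP n) ((psi n i)⁻¹), diagP_sq, one_mul])

theorem phi_r (n : ℕ) (i : ZMod 4) : phi n (DihedralGroup.r i) = (rotP n) ^ i.val := rfl

theorem phi_sr (n : ℕ) (i : ZMod 4) : phi n (DihedralGroup.sr i) = diagP n * (rotP n) ^ i.val := rfl

-- explicit coercions
theorem coe_phi_r0 (n : ℕ) : ⇑(phi n (DihedralGroup.r 0)) = fun p => p := by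
  rw [phi_r, show (0 : ZMod 4).val = 0 from rfl]; rfl

theorem coe_phi_r1 (n : ℕ) : ⇑(phi n (DihedralGroup.r 1)) = fun p : Fin n × Fin n => (p.2.rev, p.1) := by
  rw [phi_r, show (1 : ZMod 4).val = 1 from rfl]; rfl

theorem coe_phi_r2 (n : ℕ) : ⇑(phi n (DihedralGroup.r 2)) = fun p : Fin n × Fin n => (p.1.rev, p.2.rev) := by
  rw [phi_r, show (2 : ZMod 4).val = 2 from rfl]
  funext p
  show rotP n (rotP n p) = _
  simp [rotP]

theorem coe_phi_r3 (n : ℕ) : ⇑(phi n (DihedralGroup.r 3)) = fun p : Fin n × Fin n => (p.2, p.1.rev) := by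
  rw [phi_r, show (3 : ZMod 4).val = 3 from rfl]
  funext p
  show rotP n (rotP n (rotP n p)) = _
  simp [rotP]

theorem coe_phi_sr0 (n : ℕ) : ⇑(phi n (DihedralGroup.sr 0)) = fun p : Fin n × Fin n => (p.2, p.1) := by
  rw [phi_sr, show (0 : ZMod 4).val = 0 from rfl]
  funext p
  show diagP n ((rotP n ^ 0) p) = _
  simp [diagP, pow_zero]

theorem coe_phi_sr1 (n : ℕ) : ⇑(phi n (DihedralGroup.sr 1)) = fun p : Fin n × Fin n => (p.1, p.2.rev) := by
  rw [phi_sr, show (1 : ZMod 4).val = 1 from rfl]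
  funext p
  show diagP n ((rotP n ^ 1) p) = _
  simp [rotP, diagP, pow_one]

theorem coe_phi_sr2 (n : ℕ) : ⇑(phi n (DihedralGroup.sr 2)) = fun p : Fin n × Fin n => (p.2.rev, p.1.rev) := by
  rw [phi_sr, show (2 : ZMod 4).val = 2 from rfl]
  funext p
  show diagP n (rotP n (rotP n p)) = _
  simp [rotP, diagP]

theorem coe_phi_sr3 (n : ℕ) : ⇑(phi n (DihedralGroup.sr 3)) = fun p : Fin n × Fin n => (p.1.rev, p.2) := by
  rw [phi_sr, show (3 : ZMod 4).val = 3 from rfl]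
  funext p
  show diagP n (rotP n (rotP n (rotP n p))) = _
  simp [rotP, diagP]

/-- boards with r blockers -/
abbrev Board (n r : ℕ) := {B : Finset (Fin n × Fin n) // B.card = r}

noncomputable instance boardAction (n r : ℕ) : MulAction (DihedralGroup 4) (Board n r) where
  smul g B := ⟨B.1.image (phi n g), by
    rw [Finset.card_image_of_injective _ (phi n g).injective, B.2]⟩
  one_smul B := Subtype.ext (by
    show B.1.image (phi n 1) = B.1
    rw [map_one]
    simp)
  mul_smul g h B := Subtype.ext (by
    show B.1.image (phi n (g * h)) = (B.1.image (phi n h)).image (phi n g)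
    rw [map_mul, Finset.image_image]
    rfl)

theorem smul_board_coe (n r : ℕ) (g : DihedralGroup 4) (B : Board n r) :
    (g • B).1 = B.1.image (phi n g) := rfl

noncomputable instance boardOrbitRelDecidable (n r : ℕ) :
    DecidableRel (MulAction.orbitRel (DihedralGroup 4) (Board n r)).r :=
  fun a b => decidable_of_iff (∃ g : DihedralGroup 4, g • b = a) MulAction.mem_orbit_iff.symm

noncomputable instance boardQuotientFintype (n r : ℕ) :
    Fintype (Quotient (MulAction.orbitRel (DihedralGroup 4) (Board n r))) :=
  @Quotient.fintype _ _ _ (fun a b => boardOrbitRelDecidable n r a b)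

theorem burnside_board (n r : ℕ) :
    (∑ g : DihedralGroup 4, Fintype.card (MulAction.fixedBy (Board n r) g)) =
      Fintype.card (Quotient (MulAction.orbitRel (DihedralGroup 4) (Board n r))) * 8 := by
  rw [MulAction.sum_card_fixedBy_eq_card_orbits_mul_card_group, DihedralGroup.card]

theorem card_fixedBy_board (n r : ℕ) (g : DihedralGroup 4) :
    Fintype.card (MulAction.fixedBy (Board n r) g) =
      (univ.filter fun B : Finset (Fin n × Fin n) =>
        B.card = r ∧ B.image (phi n g) = B).card := by
  rw [← Fintype.card_subtype]
  apply Fintype.card_congr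
  exact {
    toFun := fun B => ⟨B.1.1, B.1.2, congrArg Subtype.val B.2⟩
    invFun := fun B => ⟨⟨B.1, B.2.1⟩, Subtype.ext B.2.2⟩
    left_inv := fun B => rfl
    right_inv := fun B => rfl }

theorem zmod4_cases (i : ZMod 4) : i = 0 ∨ i = 1 ∨ i = 2 ∨ i = 3 := by revert i; decide

theorem phi_mem_D4 (n : ℕ) (g : DihedralGroup 4) : ⇑(phi n g) ∈ D4 n := by
  have hD : ∀ f, f ∈ D4 n ↔ f = (fun p : Fin n × Fin n => p) ∨ f = (fun p : Fin n × Fin n => (p.2.rev, p.1))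
      ∨ f = (fun p : Fin n × Fin n => (p.1.rev, p.2.rev)) ∨ f = (fun p : Fin n × Fin n => (p.2, p.1.rev))
      ∨ f = (fun p : Fin n × Fin n => (p.1.rev, p.2)) ∨ f = (fun p : Fin n × Fin n => (p.1, p.2.rev))
      ∨ f = (fun p : Fin n × Fin n => (p.2, p.1)) ∨ f = (fun p : Fin n × Fin n => (p.2.rev, p.1.rev)) := by
    intro f
    simp [D4, Set.mem_insert_iff]
  rw [hD]
  rcases g with i | i <;> rcases zmod4_cases i with rfl | rfl | rfl | rfl
  · exact Or.inl (coe_phi_r0 n)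
  · exact Or.inr (Or.inl (coe_phi_r1 n))
  · exact Or.inr (Or.inr (Or.inl (coe_phi_r2 n)))
  · exact Or.inr (Or.inr (Or.inr (Or.inl (coe_phi_r3 n))))
  · exact Or.inr (Or.inr (Or.inr (Or.inr (Or.inr (Or.inr (Or.inl (coe_phi_sr0 n)))))))
  · exact Or.inr (Or.inr (Or.inr (Or.inr (Or.inr (Or.inl (coe_phi_sr1 n))))))
  · exact Or.inr (Or.inr (Or.inr (Or.inr (Or.inr (Or.inr (Or.inr (coe_phi_sr2 n)))))))
  · exact Or.inr (Or.inr (Or.inr (Or.inr (Or.inl (coe_phi_sr3 n)))))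

theorem D4_sub_phi (n : ℕ) : ∀ h ∈ D4 n, ∃ g : DihedralGroup 4, ⇑(phi n g) = h := by
  intro h hh
  simp only [D4, Set.mem_insert_iff, Set.mem_singleton_iff] at hh
  rcases hh with rfl | rfl | rfl | rfl | rfl | rfl | rfl | rfl
  · exact ⟨DihedralGroup.r 0, coe_phi_r0 n⟩
  · exact ⟨DihedralGroup.r 1, coe_phi_r1 n⟩
  · exact ⟨DihedralGroup.r 2, coe_phi_r2 n⟩
  · exact ⟨DihedralGroup.r 3, coe_phi_r3 n⟩
  · exact ⟨DihedralGroup.sr 3, coe_phi_sr3 n⟩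
  · exact ⟨DihedralGroup.sr 1, coe_phi_sr1 n⟩
  · exact ⟨DihedralGroup.sr 0, coe_phi_sr0 n⟩
  · exact ⟨DihedralGroup.sr 2, coe_phi_sr2 n⟩

theorem orbitOf_eq_phiOrbit (n : ℕ) (B : Finset (Fin n × Fin n)) :
    orbitOf (D4 n) B = {C | ∃ g : DihedralGroup 4, B.image (phi n g) = C} := by
  ext C
  constructor
  · rintro ⟨h, hh, rfl⟩
    obtain ⟨g, hg⟩ := D4_sub_phi n h hh
    exact ⟨g, by rw [hg]⟩
  · rintro ⟨g, rfl⟩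
    exact ⟨⇑(phi n g), phi_mem_D4 n g, rfl⟩

theorem image_phi_mul (n : ℕ) (g h : DihedralGroup 4) (B : Finset (Fin n × Fin n)) :
    B.image (phi n (g * h)) = (B.image (phi n h)).image (phi n g) := by
  rw [map_mul, Finset.image_image]
  rfl

theorem orbitOf_eq_iff (n : ℕ) (B B' : Finset (Fin n × Fin n)) :
    orbitOf (D4 n) B = orbitOf (D4 n) B' ↔ ∃ g : DihedralGroup 4, B'.image (phi n g) = B := by
  constructor
  · intro h
    have hB : B ∈ orbitOf (D4 n) B := by
      rw [orbitOf_eq_phiOrbit]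
      exact ⟨1, by rw [show (1 : DihedralGroup 4) = DihedralGroup.r 0 from rfl, coe_phi_r0]; simp⟩
    rw [h, orbitOf_eq_phiOrbit] at hB
    exact hB
  · rintro ⟨g, hg⟩
    rw [orbitOf_eq_phiOrbit, orbitOf_eq_phiOrbit]
    ext C
    constructor
    · rintro ⟨h, rfl⟩
      exact ⟨h * g, by rw [image_phi_mul, hg]⟩
    · rintro ⟨h, rfl⟩
      refine ⟨h * g⁻¹, ?_⟩
      rw [← hg, ← image_phi_mul, inv_mul_cancel_right]

theorem ncard_orbitSet (n r : ℕ) :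
    Set.ncard {O : Set (Finset (Fin n × Fin n)) | ∃ B, B.card = r ∧ O = orbitOf (D4 n) B} =
      Fintype.card (Quotient (MulAction.orbitRel (DihedralGroup 4) (Board n r))) := by
  set S := {O : Set (Finset (Fin n × Fin n)) | ∃ B, B.card = r ∧ O = orbitOf (D4 n) B} with hS
  have wd : ∀ a b : Board n r, MulAction.orbitRel (DihedralGroup 4) (Board n r) a b →
      orbitOf (D4 n) a.1 = orbitOf (D4 n) b.1 := by
    intro a b hab
    obtain ⟨g, hg⟩ := MulAction.mem_orbit_iff.mp hab
    exact (orbitOf_eq_iff n a.1 b.1).mpr ⟨g, congrArg Subtype.val hg⟩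
  set Φ : Quotient (MulAction.orbitRel (DihedralGroup 4) (Board n r)) → S :=
    Quotient.lift (fun B : Board n r => (⟨orbitOf (D4 n) B.1, B.1, B.2, rfl⟩ : S))
      (fun a b hab => Subtype.ext (wd a b hab)) with hΦ
  have hbij : Function.Bijective Φ := by
    constructor
    · intro x y
      induction x using Quotient.ind
      induction y using Quotient.ind
      rename_i a b
      intro h
      have h2 : orbitOf (D4 n) a.1 = orbitOf (D4 n) b.1 := congrArg Subtype.val h
      obtain ⟨g, hg⟩ := (orbitOf_eq_iff n a.1 b.1).mp h2
      exact Quotient.sound (MulAction.mem_orbit_iff.mpr ⟨g, Subtype.ext hg⟩)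
    · rintro ⟨O, B, hB, rfl⟩
      exact ⟨Quotient.mk _ ⟨B, hB⟩, rfl⟩
  have h1 : Set.ncard S = Nat.card S := (Nat.card_coe_set_eq S).symm
  rw [h1, ← Nat.card_eq_of_bijective Φ hbij, Nat.card_eq_fintype_card]

section Cards

variable (k : ℕ)

theorem card_univ_grid : (univ : Finset (Fin (2*k) × Fin (2*k))).card = 2*k*(2*k) := by
  rw [Finset.card_univ, Fintype.card_prod, Fintype.card_fin]

theorem hk2k : k ≤ 2*k := by omega

theorem card_quarter :
    ((univ : Finset (Fin (2*k) × Fin (2*k))).filter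
      (fun p => p.1.val < k ∧ p.2.val < k)).card = k * k := by
  have h : (univ : Finset (Fin (2*k) × Fin (2*k))).filter (fun p => p.1.val < k ∧ p.2.val < k) =
      (univ : Finset (Fin k × Fin k)).image
        (fun q => (Fin.castLE (hk2k k) q.1, Fin.castLE (hk2k k) q.2)) := by
    ext p
    simp only [mem_filter, mem_univ, true_and, mem_image]
    constructor
    · rintro ⟨h1, h2⟩
      exact ⟨(⟨p.1.val, h1⟩, ⟨p.2.val, h2⟩), Prod.ext (Fin.ext rfl) (Fin.ext rfl)⟩
    · rintro ⟨q, rfl⟩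
      exact ⟨q.1.isLt, q.2.isLt⟩
  have hinj : Function.Injective (fun q : Fin k × Fin k =>
      ((Fin.castLE (hk2k k) q.1, Fin.castLE (hk2k k) q.2) : Fin (2*k) × Fin (2*k))) := by
    intro a b hab
    have h1 := congrArg Prod.fst hab
    have h2 := congrArg Prod.snd hab
    exact Prod.ext (Fin.castLE_injective (hk2k k) h1) (Fin.castLE_injective (hk2k k) h2)
  rw [h, Finset.card_image_of_injective _ hinj, Finset.card_univ, Fintype.card_prod]
  simp

theorem card_tophalf :
    ((univ : Finset (Fin (2*k) × Fin (2*k))).filter (fun p => p.1.val < k)).card = k * (2*k) := by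
  have h : (univ : Finset (Fin (2*k) × Fin (2*k))).filter (fun p => p.1.val < k) =
      (univ : Finset (Fin k × Fin (2*k))).image
        (fun q => (Fin.castLE (hk2k k) q.1, q.2)) := by
    ext p
    simp only [mem_filter, mem_univ, true_and, mem_image]
    constructor
    · intro h1
      exact ⟨(⟨p.1.val, h1⟩, p.2), Prod.ext (Fin.ext rfl) rfl⟩
    · rintro ⟨q, rfl⟩
      exact q.1.isLt
  have hinj : Function.Injective (fun q : Fin k × Fin (2*k) =>
      ((Fin.castLE (hk2k k) q.1, q.2) : Fin (2*k) × Fin (2*k))) := by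
    intro a b hab
    have h1 := congrArg Prod.fst hab
    have h2 := congrArg Prod.snd hab
    exact Prod.ext (Fin.castLE_injective (hk2k k) h1) h2
  rw [h, Finset.card_image_of_injective _ hinj, Finset.card_univ, Fintype.card_prod]
  simp

theorem card_lefthalf :
    ((univ : Finset (Fin (2*k) × Fin (2*k))).filter (fun p => p.2.val < k)).card = k * (2*k) := by
  have h : ((univ : Finset (Fin (2*k) × Fin (2*k))).filter (fun p => p.2.val < k)).card =
      ((univ : Finset (Fin (2*k) × Fin (2*k))).filter (fun p => p.1.val < k)).card := by
    refine Finset.card_bij' (fun p _ => (p.2, p.1)) (fun p _ => (p.2, p.1)) ?_ ?_ ?_ ?_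
    · intro p hp
      simp only [mem_filter, mem_univ, true_and] at hp ⊢
      exact hp
    · intro p hp
      simp only [mem_filter, mem_univ, true_and] at hp ⊢
      exact hp
    · intro p _; rfl
    · intro p _; rfl
  rw [h, card_tophalf]

theorem card_diag :
    ((univ : Finset (Fin (2*k) × Fin (2*k))).filter (fun p => p.1.val = p.2.val)).card = 2*k := by
  have h : (univ : Finset (Fin (2*k) × Fin (2*k))).filter (fun p => p.1.val = p.2.val) =
      (univ : Finset (Fin (2*k))).image (fun i => (i, i)) := by
    ext p
    simp only [mem_filter, mem_univ, true_and, mem_image]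
    constructor
    · intro hp
      exact ⟨p.1, Prod.ext rfl (Fin.ext hp)⟩
    · rintro ⟨i, rfl⟩
      rfl
  rw [h, Finset.card_image_of_injective _ (fun a b hab => (Prod.ext_iff.mp hab).1),
    Finset.card_univ, Fintype.card_fin]

theorem card_anti :
    ((univ : Finset (Fin (2*k) × Fin (2*k))).filter
      (fun p => p.1.val + p.2.val = 2*k - 1)).card = 2*k := by
  have h : (univ : Finset (Fin (2*k) × Fin (2*k))).filter (fun p => p.1.val + p.2.val = 2*k-1) =
      (univ : Finset (Fin (2*k))).image (fun i => (i, i.rev)) := by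
    ext p
    simp only [mem_filter, mem_univ, true_and, mem_image]
    constructor
    · intro hp
      have h1 := p.1.isLt
      have h2 := p.2.isLt
      refine ⟨p.1, Prod.ext rfl (Fin.ext ?_)⟩
      rw [Fin.val_rev]
      omega
    · rintro ⟨i, rfl⟩
      have := i.isLt
      simp only [Fin.val_rev]
      omega
  rw [h, Finset.card_image_of_injective _ (fun a b hab => (Prod.ext_iff.mp hab).1),
    Finset.card_univ, Fintype.card_fin]

theorem key_poly : 2*k*(2*k) = 2*(k*(2*k-1)) + 2*k := by
  rcases k with _ | m
  · rfl
  · have h : 2*(m+1) - 1 = 2*m+1 := by omega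
    rw [h]; ring

theorem card_above :
    ((univ : Finset (Fin (2*k) × Fin (2*k))).filter
      (fun p => p.1.val < p.2.val)).card = k * (2*k - 1) := by
  have hsym : ((univ : Finset (Fin (2*k) × Fin (2*k))).filter (fun p => p.1.val < p.2.val)).card =
      ((univ : Finset (Fin (2*k) × Fin (2*k))).filter (fun p => p.2.val < p.1.val)).card := by
    refine Finset.card_bij' (fun p _ => (p.2, p.1)) (fun p _ => (p.2, p.1)) ?_ ?_ ?_ ?_
    · intro p hp
      simp only [mem_filter, mem_univ, true_and] at hp ⊢
      exact hp
    · intro p hp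
      simp only [mem_filter, mem_univ, true_and] at hp ⊢
      exact hp
    · intro p _; rfl
    · intro p _; rfl
  have h1 := Finset.card_filter_add_card_filter_not
    (s := (univ : Finset (Fin (2*k) × Fin (2*k)))) (p := fun p => p.1.val < p.2.val)
  have h2 := Finset.card_filter_add_card_filter_not
    (s := (univ : Finset (Fin (2*k) × Fin (2*k))).filter (fun p => ¬ p.1.val < p.2.val))
    (p := fun p => p.1.val = p.2.val)
  rw [Finset.filter_filter, Finset.filter_filter] at h2
  have e1 : (univ : Finset (Fin (2*k) × Fin (2*k))).filter
      (fun p => ¬ p.1.val < p.2.val ∧ p.1.val = p.2.val) =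
      (univ : Finset (Fin (2*k) × Fin (2*k))).filter (fun p => p.1.val = p.2.val) := by
    apply Finset.filter_congr; intro p _
    constructor
    · exact fun h => h.2
    · intro h; omega
  have e2 : (univ : Finset (Fin (2*k) × Fin (2*k))).filter
      (fun p => ¬ p.1.val < p.2.val ∧ ¬ p.1.val = p.2.val) =
      (univ : Finset (Fin (2*k) × Fin (2*k))).filter (fun p => p.2.val < p.1.val) := by
    apply Finset.filter_congr; intro p _
    constructor
    · intro h; omega
    · intro h; omega
  rw [e1, e2] at h2
  rw [card_univ_grid] at h1
  rw [card_diag] at h2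
  have key := key_poly k
  omega

theorem card_antiabove :
    ((univ : Finset (Fin (2*k) × Fin (2*k))).filter
      (fun p => p.1.val + p.2.val < 2*k - 1)).card = k * (2*k - 1) := by
  have hsym : ((univ : Finset (Fin (2*k) × Fin (2*k))).filter
        (fun p => p.1.val + p.2.val < 2*k-1)).card =
      ((univ : Finset (Fin (2*k) × Fin (2*k))).filter
        (fun p => 2*k-1 < p.1.val + p.2.val)).card := by
    refine Finset.card_bij' (fun p _ => (p.1.rev, p.2.rev)) (fun p _ => (p.1.rev, p.2.rev)) ?_ ?_ ?_ ?_
    · intro p hp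
      simp only [mem_filter, mem_univ, true_and] at hp ⊢
      simp only [Fin.val_rev]
      have h1 := p.1.isLt
      have h2 := p.2.isLt
      omega
    · intro p hp
      simp only [mem_filter, mem_univ, true_and] at hp ⊢
      simp only [Fin.val_rev]
      have h1 := p.1.isLt
      have h2 := p.2.isLt
      omega
    · intro p _
      simp
    · intro p _
      simp
  have h1 := Finset.card_filter_add_card_filter_not
    (s := (univ : Finset (Fin (2*k) × Fin (2*k)))) (p := fun p => p.1.val + p.2.val < 2*k-1)
  have h2 := Finset.card_filter_add_card_filter_not
    (s := (univ : Finset (Fin (2*k) × Fin (2*k))).filter (fun p => ¬ p.1.val + p.2.val < 2*k-1))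
    (p := fun p => p.1.val + p.2.val = 2*k-1)
  rw [Finset.filter_filter, Finset.filter_filter] at h2
  have e1 : (univ : Finset (Fin (2*k) × Fin (2*k))).filter
      (fun p => ¬ p.1.val + p.2.val < 2*k-1 ∧ p.1.val + p.2.val = 2*k-1) =
      (univ : Finset (Fin (2*k) × Fin (2*k))).filter (fun p => p.1.val + p.2.val = 2*k-1) := by
    apply Finset.filter_congr; intro p _
    constructor
    · exact fun h => h.2
    · intro h; omega
  have e2 : (univ : Finset (Fin (2*k) × Fin (2*k))).filter
      (fun p => ¬ p.1.val + p.2.val < 2*k-1 ∧ ¬ p.1.val + p.2.val = 2*k-1) =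
      (univ : Finset (Fin (2*k) × Fin (2*k))).filter (fun p => 2*k-1 < p.1.val + p.2.val) := by
    apply Finset.filter_congr; intro p _
    constructor
    · intro h; omega
    · intro h; omega
  rw [e1, e2] at h2
  rw [card_univ_grid] at h1
  rw [card_anti] at h2
  have key := key_poly k
  omega

end Cards

section Counts

variable (k r : ℕ)

theorem count_r0 :
    ((univ : Finset (Finset (Fin (2*k) × Fin (2*k)))).filter
      (fun B => B.card = r ∧ B.image (fun p => p) = B)).card = (4*k^2).choose r := by
  have h : ((univ : Finset (Finset (Fin (2*k) × Fin (2*k)))).filter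
      (fun B => B.card = r ∧ B.image (fun p => p) = B)) =
      ((univ : Finset (Finset (Fin (2*k) × Fin (2*k)))).filter (fun B => B.card = r)) := by
    apply Finset.filter_congr
    intro B _
    simp [Finset.image_id']
  rw [h, ← Finset.powerset_univ, ← Finset.powersetCard_eq_filter, Finset.card_powersetCard,
    card_univ_grid]
  congr 1
  ring

theorem count_r1 :
    ((univ : Finset (Finset (Fin (2*k) × Fin (2*k)))).filter
      (fun B => B.card = r ∧ B.image (fun p : Fin (2*k) × Fin (2*k) => (p.2.rev, p.1)) = B)).card =
      if 4 ∣ r then (k^2).choose (r/4) else 0 := by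
  rw [rot4_free _ ?_ (univ.filter (fun p => p.1.val < k ∧ p.2.val < k)) ?_ ?_ r, card_quarter,
    sq]
  · intro x
    simp [Fin.rev_rev]
  · intro y
    have h1 := y.1.isLt
    have h2 := y.2.isLt
    simp only [mem_filter, mem_univ, true_and, Fin.val_rev]
    omega
  · intro x hx
    have h1 := x.1.isLt
    have h2 := x.2.isLt
    simp only [mem_filter, mem_univ, true_and, Fin.val_rev] at hx ⊢
    omega

theorem count_r2 :
    ((univ : Finset (Finset (Fin (2*k) × Fin (2*k)))).filter
      (fun B => B.card = r ∧
        B.image (fun p : Fin (2*k) × Fin (2*k) => (p.1.rev, p.2.rev)) = B)).card =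
      if 2 ∣ r then (2*k^2).choose (r/2) else 0 := by
  rw [invol_free _ ?_ (univ.filter (fun p => p.1.val < k)) ?_ ?_ r, card_tophalf,
    show k*(2*k) = 2*k^2 by ring]
  · intro x
    simp [Fin.rev_rev]
  · intro y
    have h1 := y.1.isLt
    simp only [mem_filter, mem_univ, true_and, Fin.val_rev]
    omega
  · intro x hx
    have h1 := x.1.isLt
    simp only [mem_filter, mem_univ, true_and, Fin.val_rev] at hx ⊢
    omega

theorem image_two_sided_inv {α : Type*} [DecidableEq α] (f g : α → α)
    (hfg : ∀ x, f (g x) = x) (hgf : ∀ x, g (f x) = x) (B : Finset α) :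
    B.image f = B ↔ B.image g = B := by
  constructor
  · intro h
    conv_lhs => rw [← h]
    rw [Finset.image_image]
    have : (g ∘ f) = id := funext hgf
    rw [this, Finset.image_id]
  · intro h
    conv_lhs => rw [← h]
    rw [Finset.image_image]
    have : (f ∘ g) = id := funext hfg
    rw [this, Finset.image_id]

theorem count_r3 :
    ((univ : Finset (Finset (Fin (2*k) × Fin (2*k)))).filter
      (fun B => B.card = r ∧
        B.image (fun p : Fin (2*k) × Fin (2*k) => (p.2, p.1.rev)) = B)).card =
      if 4 ∣ r then (k^2).choose (r/4) else 0 := by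
  rw [← count_r1 k r]
  congr 1
  apply Finset.filter_congr
  intro B _
  simp only [eq_iff_iff, and_congr_right_iff]
  intro _
  apply image_two_sided_inv
  · intro x
    simp [Fin.rev_rev]
  · intro x
    simp [Fin.rev_rev]

theorem count_sr0 :
    ((univ : Finset (Finset (Fin (2*k) × Fin (2*k)))).filter
      (fun B => B.card = r ∧
        B.image (fun p : Fin (2*k) × Fin (2*k) => (p.2, p.1)) = B)).card =
      ∑ t ∈ range (r + 1),
        (if 2 ∣ (r - t) then (2*k).choose t * (k*(2*k-1)).choose ((r - t) / 2) else 0) := by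
  rw [invol_count _ ?_ (univ.filter (fun p => p.1.val = p.2.val))
    (univ.filter (fun p => p.1.val < p.2.val)) ?_ ?_ ?_ ?_ r, card_diag, card_above]
  · intro x; simp
  · intro x hx
    simp only [mem_filter, mem_univ, true_and] at hx
    exact Prod.ext (Fin.ext hx.symm) (Fin.ext hx)
  · intro y
    simp only [mem_filter, mem_univ, true_and]
    omega
  · intro x hx
    simp only [mem_filter, mem_univ, true_and] at hx ⊢
    omega
  · intro x hx
    simp only [mem_filter, mem_univ, true_and] at hx ⊢
    omega

theorem count_sr1 :
    ((univ : Finset (Finset (Fin (2*k) × Fin (2*k)))).filter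
      (fun B => B.card = r ∧
        B.image (fun p : Fin (2*k) × Fin (2*k) => (p.1, p.2.rev)) = B)).card =
      if 2 ∣ r then (2*k^2).choose (r/2) else 0 := by
  rw [invol_free _ ?_ (univ.filter (fun p => p.2.val < k)) ?_ ?_ r, card_lefthalf,
    show k*(2*k) = 2*k^2 by ring]
  · intro x
    simp [Fin.rev_rev]
  · intro y
    have h2 := y.2.isLt
    simp only [mem_filter, mem_univ, true_and, Fin.val_rev]
    omega
  · intro x hx
    have h2 := x.2.isLt
    simp only [mem_filter, mem_univ, true_and, Fin.val_rev] at hx ⊢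
    omega

theorem count_sr2 :
    ((univ : Finset (Finset (Fin (2*k) × Fin (2*k)))).filter
      (fun B => B.card = r ∧
        B.image (fun p : Fin (2*k) × Fin (2*k) => (p.2.rev, p.1.rev)) = B)).card =
      ∑ t ∈ range (r + 1),
        (if 2 ∣ (r - t) then (2*k).choose t * (k*(2*k-1)).choose ((r - t) / 2) else 0) := by
  rw [invol_count _ ?_ (univ.filter (fun p => p.1.val + p.2.val = 2*k-1))
    (univ.filter (fun p => p.1.val + p.2.val < 2*k-1)) ?_ ?_ ?_ ?_ r, card_anti, card_antiabove]
  · intro x; simp [Fin.rev_rev]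
  · intro x hx
    have h1 := x.1.isLt
    have h2 := x.2.isLt
    simp only [mem_filter, mem_univ, true_and] at hx
    refine Prod.ext (Fin.ext ?_) (Fin.ext ?_) <;> simp only [Fin.val_rev] <;> omega
  · intro y
    have h1 := y.1.isLt
    have h2 := y.2.isLt
    simp only [mem_filter, mem_univ, true_and, Fin.val_rev]
    omega
  · intro x hx
    have h1 := x.1.isLt
    have h2 := x.2.isLt
    simp only [mem_filter, mem_univ, true_and, Fin.val_rev] at hx ⊢
    omega
  · intro x hx
    have h1 := x.1.isLt
    have h2 := x.2.isLt
    simp only [mem_filter, mem_univ, true_and, Fin.val_rev] at hx ⊢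
    omega

theorem count_sr3 :
    ((univ : Finset (Finset (Fin (2*k) × Fin (2*k)))).filter
      (fun B => B.card = r ∧
        B.image (fun p : Fin (2*k) × Fin (2*k) => (p.1.rev, p.2)) = B)).card =
      if 2 ∣ r then (2*k^2).choose (r/2) else 0 := by
  rw [invol_free _ ?_ (univ.filter (fun p => p.1.val < k)) ?_ ?_ r, card_tophalf,
    show k*(2*k) = 2*k^2 by ring]
  · intro x
    simp [Fin.rev_rev]
  · intro y
    have h1 := y.1.isLt
    simp only [mem_filter, mem_univ, true_and, Fin.val_rev]
    omega
  · intro x hx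
    have h1 := x.1.isLt
    simp only [mem_filter, mem_univ, true_and, Fin.val_rev] at hx ⊢
    omega

end Counts

/-- Burnside count, even square boards: with `N` the number of
orbits of boards with `r` blockers on the `2k × 2k` grid under `D4`,
`8N = C(4k²,r) + 2·[4∣r]·C(k²,r/4) + 3·[2∣r]·C(2k²,r/2)
      + 2·Σ_{t=0}^{r} [2∣(r−t)]·C(2k,t)·C(k(2k−1),(r−t)/2)`. -/
theorem stmt_10 (k r : ℕ) (hk : 1 ≤ k) (hr1 : 1 ≤ r) (hr2 : r ≤ 4 * k ^ 2) :
    8 * Set.ncard {O : Set (Finset (Fin (2*k) × Fin (2*k))) |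
        ∃ B : Finset (Fin (2*k) × Fin (2*k)), B.card = r ∧ O = orbitOf (D4 (2*k)) B} =
      Nat.choose (4 * k ^ 2) r
      + 2 * (if 4 ∣ r then Nat.choose (k ^ 2) (r / 4) else 0)
      + 3 * (if 2 ∣ r then Nat.choose (2 * k ^ 2) (r / 2) else 0)
      + 2 * ∑ t ∈ Finset.range (r + 1),
          (if 2 ∣ (r - t) then
            Nat.choose (2 * k) t * Nat.choose (k * (2 * k - 1)) ((r - t) / 2)
          else 0) := by
  rw [ncard_orbitSet (2*k) r, mul_comm, ← burnside_board (2*k) r]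
  have huniv : (univ : Finset (DihedralGroup 4)) =
      insert (DihedralGroup.r 0) (insert (DihedralGroup.r 1) (insert (DihedralGroup.r 2)
        (insert (DihedralGroup.r 3) (insert (DihedralGroup.sr 0) (insert (DihedralGroup.sr 1)
          (insert (DihedralGroup.sr 2) ({DihedralGroup.sr 3} : Finset (DihedralGroup 4)))))))) := by
    refine (Finset.eq_univ_iff_forall.mpr ?_).symm
    intro g
    rcases g with i | i <;> rcases zmod4_cases i with rfl | rfl | rfl | rfl <;> simp
  rw [huniv, Finset.sum_insert (by decide), Finset.sum_insert (by decide),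
    Finset.sum_insert (by decide), Finset.sum_insert (by decide), Finset.sum_insert (by decide),
    Finset.sum_insert (by decide), Finset.sum_insert (by decide), Finset.sum_singleton]
  rw [card_fixedBy_board, card_fixedBy_board, card_fixedBy_board, card_fixedBy_board,
    card_fixedBy_board, card_fixedBy_board, card_fixedBy_board, card_fixedBy_board]
  simp only [coe_phi_r0, coe_phi_r1, coe_phi_r2, coe_phi_r3, coe_phi_sr0, coe_phi_sr1,
    coe_phi_sr2, coe_phi_sr3]
  rw [count_r0 k r, count_r1 k r, count_r2 k r, count_r3 k r, count_sr0 k r, count_sr1 k r,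
    count_sr2 k r, count_sr3 k r]
  generalize (4*k^2).choose r = A
  generalize (if 4 ∣ r then (k^2).choose (r/4) else 0) = B4
  generalize (if 2 ∣ r then (2*k^2).choose (r/2) else 0) = B2
  generalize (∑ t ∈ range (r + 1),
    (if 2 ∣ (r - t) then (2*k).choose t * (k*(2*k-1)).choose ((r - t) / 2) else 0)) = S
  ring
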